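/- arXiv:1909.05500 — 6 statements merged into one kernel-verified Lean document; each statement's English description precedes it below -/
import Mathlib

section
/- For every nonnegative integer k, ∑_{l=0}^{k} 1/((l+1)²(k+1-l)²) ≤ (4π²/3) · 1/(k+1)². -/
lemma basel_partial (k : ℕ) :
    ∑ l ∈ Finset.range (k + 1), (1 : ℝ) / ((l : ℝ) + 1) ^ 2 ≤ 2 := by
  have h : ∀ n : ℕ, ∑ l ∈ Finset.range (n + 1), (1 : ℝ) / ((l : ℝ) + 1) ^ 2
      ≤ 2 - 1 / ((n : ℝ) + 1) := by
    intro n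
    induction n with
    | zero => norm_num
    | succ m ih =>
      rw [Finset.sum_range_succ]
      have hm : (0:ℝ) < (m:ℝ) + 1 := by positivity
      have hm2 : (0:ℝ) < (m:ℝ) + 2 := by positivity
      have key : 1 / ((m:ℝ) + 1 + 1) ^ 2 ≤ 1 / ((m:ℝ) + 1) - 1 / ((m:ℝ) + 1 + 1) := by
        rw [div_sub_div _ _ (ne_of_gt hm) (by positivity)]
        rw [div_le_div_iff₀ (by positivity) (by positivity)]
        ring_nf
        nlinarith
      push_cast
      linarith
  calc ∑ l ∈ Finset.range (k + 1), (1 : ℝ) / ((l : ℝ) + 1) ^ 2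
      ≤ 2 - 1 / ((k : ℝ) + 1) := h k
    _ ≤ 2 := by
        have : (0:ℝ) < (k:ℝ) + 1 := by positivity
        have : (0:ℝ) ≤ 1 / ((k:ℝ) + 1) := by positivity
        linarith

open Real in
theorem stmt_3 (k : ℕ) :
    ∑ l ∈ Finset.range (k + 1),
      (1 : ℝ) / (((l : ℝ) + 1) ^ 2 * ((k : ℝ) + 1 - l) ^ 2)
      ≤ (4 * π ^ 2 / 3) * (1 / ((k : ℝ) + 1) ^ 2) := by
  have hk2 : (0:ℝ) < (k:ℝ) + 2 := by positivity
  have hterm : ∀ l ∈ Finset.range (k + 1),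
      (1 : ℝ) / (((l : ℝ) + 1) ^ 2 * ((k : ℝ) + 1 - l) ^ 2)
        ≤ 2 / ((k:ℝ) + 2) ^ 2 * (1 / ((l:ℝ) + 1) ^ 2 + 1 / ((k:ℝ) + 1 - l) ^ 2) := by
    intro l hl
    rw [Finset.mem_range] at hl
    have hlk : (l : ℝ) ≤ k := by exact_mod_cast Nat.lt_succ_iff.mp hl
    have ha : (0:ℝ) < (l:ℝ) + 1 := by positivity
    have hb : (0:ℝ) < (k:ℝ) + 1 - l := by linarith
    set a := (l:ℝ) + 1 with ha'
    set b := (k:ℝ) + 1 - l with hb'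
    have hab : a + b = (k:ℝ) + 2 := by simp [ha', hb']; ring
    rw [← hab]
    rw [div_add_div _ _ (by positivity) (by positivity), div_mul_div_comm,
      div_le_div_iff₀ (by positivity) (by positivity)]
    nlinarith [sq_nonneg (a - b), sq_nonneg (a*b), sq_nonneg a, sq_nonneg b,
      mul_pos ha hb, sq_nonneg (a*a - b*b), mul_pos (mul_pos ha hb) (mul_pos ha hb)]
  have hsum := Finset.sum_le_sum hterm
  have hrefl : ∑ l ∈ Finset.range (k + 1), (1:ℝ) / ((k:ℝ) + 1 - l) ^ 2
      = ∑ l ∈ Finset.range (k + 1), (1:ℝ) / ((l:ℝ) + 1) ^ 2 := by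
    rw [← Finset.sum_range_reflect (fun l => (1:ℝ) / ((l:ℝ) + 1) ^ 2) (k+1)]
    apply Finset.sum_congr rfl
    intro l hl
    rw [Finset.mem_range] at hl
    have hlk : l ≤ k := Nat.lt_succ_iff.mp hl
    congr 2
    rw [Nat.add_sub_cancel, Nat.cast_sub hlk]
    ring
  have hB1 := basel_partial k
  have hS : ∑ l ∈ Finset.range (k + 1),
      (1 : ℝ) / (((l : ℝ) + 1) ^ 2 * ((k : ℝ) + 1 - l) ^ 2) ≤ 8 / ((k:ℝ) + 2) ^ 2 := by
    calc _ ≤ ∑ l ∈ Finset.range (k+1),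
          2 / ((k:ℝ) + 2) ^ 2 * (1 / ((l:ℝ) + 1) ^ 2 + 1 / ((k:ℝ) + 1 - l) ^ 2) := hsum
      _ = 2 / ((k:ℝ) + 2) ^ 2 * (∑ l ∈ Finset.range (k+1), (1:ℝ) / ((l:ℝ) + 1) ^ 2
            + ∑ l ∈ Finset.range (k+1), (1:ℝ) / ((k:ℝ) + 1 - l) ^ 2) := by
          rw [← Finset.mul_sum, Finset.sum_add_distrib]
      _ ≤ 2 / ((k:ℝ) + 2) ^ 2 * (2 + 2) := by
          rw [hrefl]
          apply mul_le_mul_of_nonneg_left (by linarith) (by positivity)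
      _ = 8 / ((k:ℝ) + 2) ^ 2 := by ring
  have hk1 : (0:ℝ) < (k:ℝ) + 1 := by positivity
  have h89 : (8:ℝ) / ((k:ℝ) + 2) ^ 2 ≤ 8 / ((k:ℝ) + 1) ^ 2 := by
    apply div_le_div_of_nonneg_left (by norm_num) (by positivity)
    nlinarith
  have hpi : (3:ℝ) < π := Real.pi_gt_three
  have hfin : (8:ℝ) / ((k:ℝ) + 1) ^ 2 ≤ (4 * π ^ 2 / 3) * (1 / ((k:ℝ) + 1) ^ 2) := by
    rw [mul_one_div]
    apply div_le_div_of_nonneg_right _ (by positivity)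
    nlinarith
  linarith
end

section
/- Let α > 0 be a real number, p, q nonnegative integers, and r = p + q. Then for every nonnegative integer k, ∑_{l=0}^{k} C(k,l) · [(l+p)!·(k-l+q)!]^{1+α} / ((l+p+1)²(k-l+q+1)²) ≤ (4π²/3) · [(k+r)!]^{1+α}/(k+r+1)². -/
open Real

lemma aux_choose (k l p : ℕ) : k.choose l ≤ (k + p).choose (l + p) := by
  induction p with
  | zero => simp
  | succ p ih =>
    have h : ((k+p)+1).choose ((l+p)+1) = (k+p).choose (l+p) + (k+p).choose ((l+p)+1) :=
      Nat.choose_succ_succ _ _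
    show k.choose l ≤ ((k+p)+1).choose ((l+p)+1)
    omega

lemma aux_choose_fact (k l p q : ℕ) (hl : l ≤ k) :
    k.choose l * ((l + p).factorial * (k - l + q).factorial) ≤ (k + p + q).factorial := by
  have h1 : k.choose l ≤ (k + p + q).choose (l + p) :=
    (aux_choose k l p).trans (Nat.choose_le_choose _ (by omega))
  have h2 : (k + p + q).choose (l + p) * (l + p).factorial * ((k + p + q) - (l + p)).factorial
      = (k + p + q).factorial := Nat.choose_mul_factorial_mul_factorial (by omega)
  have h3 : (k + p + q) - (l + p) = k - l + q := by omega
  calc k.choose l * ((l + p).factorial * (k - l + q).factorial)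
      ≤ (k + p + q).choose (l + p) * ((l + p).factorial * (k - l + q).factorial) :=
        Nat.mul_le_mul_right _ h1
    _ = (k + p + q).factorial := by rw [← h2, h3]; ring

lemma aux_basel (k : ℕ) (f : ℕ → ℕ) (hf : ∀ l, l + 1 ≤ f l) :
    ∑ l ∈ Finset.range (k + 1), (1 : ℝ) / (f l : ℝ) ^ 2 ≤ π ^ 2 / 6 := by
  have hs : HasSum (fun n : ℕ => (1 : ℝ) / ((n : ℝ) + 1) ^ 2) (π ^ 2 / 6) := by
    have h0 : HasSum (fun n : ℕ => (1 : ℝ) / (n : ℝ) ^ 2)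
        (π ^ 2 / 6 + ∑ i ∈ Finset.range 1, (1 : ℝ) / (i : ℝ) ^ 2) := by
      simpa using hasSum_zeta_two
    have h1 := (hasSum_nat_add_iff 1).2 h0
    push_cast at h1
    exact h1
  calc ∑ l ∈ Finset.range (k + 1), (1 : ℝ) / (f l : ℝ) ^ 2
      ≤ ∑ l ∈ Finset.range (k + 1), (1 : ℝ) / ((l : ℝ) + 1) ^ 2 := by
        apply Finset.sum_le_sum
        intro l _
        apply div_le_div_of_nonneg_left one_pos.le (by positivity)
        have h := hf l
        have hc : ((l : ℝ) + 1) ≤ (f l : ℝ) := by exact_mod_cast h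
        nlinarith
    _ ≤ π ^ 2 / 6 := sum_le_hasSum _ (fun i _ => by positivity) hs

open Real in
theorem stmt_4 (α : ℝ) (hα : 0 < α) (p q k : ℕ) :
    ∑ l ∈ Finset.range (k + 1),
      (k.choose l : ℝ) * (((l + p).factorial : ℝ) * ((k - l + q).factorial : ℝ)) ^ (1 + α)
        / (((l + p + 1 : ℕ) : ℝ) ^ 2 * ((k - l + q + 1 : ℕ) : ℝ) ^ 2)
      ≤ (4 * π ^ 2 / 3) * ((k + p + q).factorial : ℝ) ^ (1 + α) / ((k + p + q + 1 : ℕ) : ℝ) ^ 2 := by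
  set M : ℝ := ((k + p + q).factorial : ℝ) with hM
  have hMpos : 0 < M := by positivity
  have hMα : 0 < M ^ (1 + α) := Real.rpow_pos_of_pos hMpos _
  set s : ℝ := ((k + p + q : ℕ) : ℝ) + 2 with hs
  have hspos : 0 < s := by positivity
  -- step 1: numerator bound
  have hnum : ∀ l ∈ Finset.range (k + 1),
      (k.choose l : ℝ) * (((l + p).factorial : ℝ) * ((k - l + q).factorial : ℝ)) ^ (1 + α)
        ≤ M ^ (1 + α) := by
    intro l hl
    rw [Finset.mem_range] at hl
    have hlk : l ≤ k := by omega
    set C : ℝ := (k.choose l : ℝ) with hCdef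
    set F : ℝ := ((l + p).factorial : ℝ) * ((k - l + q).factorial : ℝ)
    have hC1 : (1 : ℝ) ≤ C := by
      have h1 : (1 : ℕ) ≤ k.choose l := Nat.choose_pos hlk
      rw [hCdef]
      exact_mod_cast h1
    have hFpos : 0 < F := by positivity
    have hCF : C * F ≤ M := by
      have h := aux_choose_fact k l p q hlk
      have h' : ((k.choose l * ((l + p).factorial * (k - l + q).factorial) : ℕ) : ℝ)
          ≤ ((k + p + q).factorial : ℝ) := by exact_mod_cast h
      push_cast at h'
      simpa [C, F, hM, mul_assoc] using h'
    calc C * F ^ (1 + α) ≤ C ^ (1 + α) * F ^ (1 + α) := by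
          apply mul_le_mul_of_nonneg_right _ (Real.rpow_nonneg hFpos.le _)
          calc C = C ^ (1 : ℝ) := (Real.rpow_one C).symm
            _ ≤ C ^ (1 + α) := Real.rpow_le_rpow_of_exponent_le hC1 (by linarith)
      _ = (C * F) ^ (1 + α) := (Real.mul_rpow (by linarith) hFpos.le).symm
      _ ≤ M ^ (1 + α) := Real.rpow_le_rpow (by positivity) hCF (by linarith)
  -- step 2: denominator sum bound
  have hden : ∑ l ∈ Finset.range (k + 1),
      (1 : ℝ) / (((l + p + 1 : ℕ) : ℝ) ^ 2 * ((k - l + q + 1 : ℕ) : ℝ) ^ 2)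
      ≤ 2 * π ^ 2 / (3 * s ^ 2) := by
    have hterm : ∀ l ∈ Finset.range (k + 1),
        (1 : ℝ) / (((l + p + 1 : ℕ) : ℝ) ^ 2 * ((k - l + q + 1 : ℕ) : ℝ) ^ 2)
        ≤ 2 / s ^ 2 * ((1:ℝ) / ((l + p + 1 : ℕ) : ℝ) ^ 2 + (1:ℝ) / ((k - l + q + 1 : ℕ) : ℝ) ^ 2) := by
      intro l hl
      rw [Finset.mem_range] at hl
      have hlk : l ≤ k := by omega
      set a : ℝ := ((l + p + 1 : ℕ) : ℝ) with ha
      set b : ℝ := ((k - l + q + 1 : ℕ) : ℝ) with hb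
      have hapos : 0 < a := by positivity
      have hbpos : 0 < b := by positivity
      have hnat : (l + p + 1) + (k - l + q + 1) = (k + p + q) + 2 := by omega
      have hab : a + b = s := by
        rw [ha, hb, hs]
        have : (((l + p + 1) + (k - l + q + 1) : ℕ) : ℝ) = (((k + p + q) + 2 : ℕ) : ℝ) := by
          exact_mod_cast congrArg (Nat.cast : ℕ → ℝ) hnat
        push_cast at this ⊢
        linarith
      have heq : (1 : ℝ) / (a ^ 2 * b ^ 2) = ((1/a + 1/b) / s) ^ 2 := by
        rw [← hab]
        field_simp
        ring
      have hkey : (1/a + 1/b) ^ 2 ≤ 2 * ((1:ℝ)/a^2 + 1/b^2) := by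
        have h := sq_nonneg (1/a - 1/b)
        have e1 : (1/a) ^ 2 = (1:ℝ)/a^2 := by rw [div_pow, one_pow]
        have e2 : (1/b) ^ 2 = (1:ℝ)/b^2 := by rw [div_pow, one_pow]
        nlinarith [h, e1, e2]
      rw [heq, div_pow]
      rw [div_le_iff₀ (by positivity)]
      calc (1/a + 1/b) ^ 2 ≤ 2 * ((1:ℝ)/a^2 + 1/b^2) := hkey
        _ = 2 / s ^ 2 * (1/a^2 + 1/b^2) * s ^ 2 := by field_simp
    calc ∑ l ∈ Finset.range (k + 1),
        (1 : ℝ) / (((l + p + 1 : ℕ) : ℝ) ^ 2 * ((k - l + q + 1 : ℕ) : ℝ) ^ 2)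
        ≤ ∑ l ∈ Finset.range (k + 1),
          2 / s ^ 2 * ((1:ℝ) / ((l + p + 1 : ℕ) : ℝ) ^ 2 + (1:ℝ) / ((k - l + q + 1 : ℕ) : ℝ) ^ 2) :=
          Finset.sum_le_sum hterm
      _ = 2 / s ^ 2 * ((∑ l ∈ Finset.range (k + 1), (1:ℝ) / ((l + p + 1 : ℕ) : ℝ) ^ 2)
            + ∑ l ∈ Finset.range (k + 1), (1:ℝ) / ((k - l + q + 1 : ℕ) : ℝ) ^ 2) := by
          rw [← Finset.mul_sum, Finset.sum_add_distrib]
      _ ≤ 2 / s ^ 2 * (π ^ 2 / 6 + π ^ 2 / 6) := by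
          apply mul_le_mul_of_nonneg_left _ (by positivity)
          apply add_le_add
          · exact aux_basel k (fun l => l + p + 1) (fun l => by show l + 1 ≤ l + p + 1; omega)
          · have hrefl : ∑ l ∈ Finset.range (k + 1), (1:ℝ) / ((k - l + q + 1 : ℕ) : ℝ) ^ 2
                = ∑ l ∈ Finset.range (k + 1), (1:ℝ) / ((l + q + 1 : ℕ) : ℝ) ^ 2 := by
              rw [← Finset.sum_range_reflect (fun l => (1:ℝ) / ((l + q + 1 : ℕ) : ℝ) ^ 2) (k+1)]
              apply Finset.sum_congr rfl
              intro l hl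
              rw [Finset.mem_range] at hl
              have e : k + 1 - 1 - l = k - l := by omega
              rw [e]
            rw [hrefl]
            exact aux_basel k (fun l => l + q + 1) (fun l => by show l + 1 ≤ l + q + 1; omega)
      _ = 2 * π ^ 2 / (3 * s ^ 2) := by field_simp; ring
  -- combine
  set t : ℝ := ((k + p + q + 1 : ℕ) : ℝ) with htdef
  have htpos : (1 : ℝ) ≤ t := by
    have h1 : (1 : ℕ) ≤ k + p + q + 1 := by omega
    rw [htdef]; exact_mod_cast h1
  have hts : t + 1 = s := by rw [htdef, hs]; push_cast; ring
  calc ∑ l ∈ Finset.range (k + 1),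
      (k.choose l : ℝ) * (((l + p).factorial : ℝ) * ((k - l + q).factorial : ℝ)) ^ (1 + α)
        / (((l + p + 1 : ℕ) : ℝ) ^ 2 * ((k - l + q + 1 : ℕ) : ℝ) ^ 2)
      ≤ ∑ l ∈ Finset.range (k + 1),
        M ^ (1 + α) * ((1:ℝ) / (((l + p + 1 : ℕ) : ℝ) ^ 2 * ((k - l + q + 1 : ℕ) : ℝ) ^ 2)) := by
        apply Finset.sum_le_sum
        intro l hl
        rw [div_eq_mul_one_div]
        exact mul_le_mul_of_nonneg_right (hnum l hl) (by positivity)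
    _ = M ^ (1 + α) * ∑ l ∈ Finset.range (k + 1),
        (1:ℝ) / (((l + p + 1 : ℕ) : ℝ) ^ 2 * ((k - l + q + 1 : ℕ) : ℝ) ^ 2) := by
        rw [Finset.mul_sum]
    _ ≤ M ^ (1 + α) * (2 * π ^ 2 / (3 * s ^ 2)) := mul_le_mul_of_nonneg_left hden hMα.le
    _ ≤ (4 * π ^ 2 / 3) * M ^ (1 + α) / t ^ 2 := by
        have hpi : 0 < π ^ 2 := by positivity
        have hle : t ^ 2 ≤ s ^ 2 := by nlinarith
        have main : 2 * π ^ 2 / (3 * s ^ 2) ≤ 4 * π ^ 2 / 3 / t ^ 2 := by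
          rw [div_le_div_iff₀ (by positivity) (by positivity)]
          have hA : π ^ 2 * t ^ 2 ≤ π ^ 2 * s ^ 2 := mul_le_mul_of_nonneg_left hle hpi.le
          have hB : (0:ℝ) ≤ π ^ 2 * s ^ 2 := by positivity
          calc 2 * π ^ 2 * t ^ 2 = 2 * (π ^ 2 * t ^ 2) := by ring
            _ ≤ 2 * (π ^ 2 * s ^ 2) := by linarith
            _ ≤ 4 * (π ^ 2 * s ^ 2) := by linarith
            _ = 4 * π ^ 2 / 3 * (3 * s ^ 2) := by ring
        calc M ^ (1 + α) * (2 * π ^ 2 / (3 * s ^ 2))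
            ≤ M ^ (1 + α) * (4 * π ^ 2 / 3 / t ^ 2) := mul_le_mul_of_nonneg_left main hMα.le
          _ = (4 * π ^ 2 / 3) * M ^ (1 + α) / t ^ 2 := by ring
end

section
/- Let A be an N×N Hermitian positive definite matrix with smallest eigenvalue at least 1/κ and largest eigenvalue at most 1 (κ ≥ 1), let |b⟩ be a unit vector, and Q_b = I - |b⟩⟨b|. For f ∈ [0,1], every nonzero eigenvalue λ of Q_b((1-f)I + fA)²Q_b satisfies λ ≥ (1 - f + f/κ)². -/
open scoped InnerProductSpace
open Matrix

theorem stmt_10 (N : ℕ) (κ f : ℝ) (hκ : 1 ≤ κ) (hf : f ∈ Set.Icc (0:ℝ) 1)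
    (A : Matrix (Fin N) (Fin N) ℂ) (hA : A.IsHermitian)
    (hspec : ∀ i, 1 / κ ≤ hA.eigenvalues i ∧ hA.eigenvalues i ≤ 1)
    (b : Fin N → ℂ) (hb : ∑ i, ‖b i‖ ^ 2 = 1)
    (Q : Matrix (Fin N) (Fin N) ℂ) (hQ : Q = 1 - Matrix.vecMulVec b (star b))
    (M : Matrix (Fin N) (Fin N) ℂ)
    (hM : M = Q * (((1 - f : ℝ) : ℂ) • (1 : Matrix (Fin N) (Fin N) ℂ) + ((f : ℝ) : ℂ) • A) ^ 2 * Q)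
    (hMh : M.IsHermitian) :
    ∀ i, hMh.eigenvalues i ≠ 0 → (1 - f + f / κ) ^ 2 ≤ hMh.eigenvalues i := by
  obtain ⟨hf0, hf1⟩ := hf
  have hκ0 : (0:ℝ) < κ := lt_of_lt_of_le one_pos hκ
  set B : Matrix (Fin N) (Fin N) ℂ :=
    ((1 - f : ℝ) : ℂ) • (1 : Matrix (Fin N) (Fin N) ℂ) + ((f : ℝ) : ℂ) • A with hBdef
  have hB : B.IsHermitian := by
    unfold B
    simp only [Matrix.IsHermitian, Matrix.conjTranspose_add, Matrix.conjTranspose_smul,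
      Matrix.conjTranspose_one, hA.eq, Complex.star_def, Complex.conj_ofReal]
  have hc0 : 0 < 1 - f + f / κ := by
    have h1 : 1 - f + f / κ = ((1 - f) * κ + f) / κ := by field_simp
    rw [h1]
    apply div_pos _ hκ0
    nlinarith
  -- eigen-relation for B
  have hBu : ∀ j, B *ᵥ ⇑(hA.eigenvectorBasis j) =
      ((1 - f + f * hA.eigenvalues j : ℝ) : ℂ) • ⇑(hA.eigenvectorBasis j) := by
    intro j
    have h := hA.mulVec_eigenvectorBasis j
    unfold B
    rw [Matrix.add_mulVec, Matrix.smul_mulVec, Matrix.smul_mulVec,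
      Matrix.one_mulVec, h]
    funext k
    simp only [Pi.add_apply, Pi.smul_apply, Complex.real_smul, smul_eq_mul]
    push_cast
    ring
  -- Q facts
  have hbb : dotProduct (star b) b = 1 := by
    have h1 : ∀ k, star (b k) * b k = ((‖b k‖ ^ 2 : ℝ) : ℂ) := by
      intro k
      rw [mul_comm, Complex.star_def, Complex.mul_conj, Complex.normSq_eq_norm_sq]
    simp only [dotProduct, Pi.star_apply, h1]
    rw [← Complex.ofReal_sum, hb, Complex.ofReal_one]
  have hP2 : Matrix.vecMulVec b (star b) * Matrix.vecMulVec b (star b)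
      = Matrix.vecMulVec b (star b) := by
    ext i j
    simp only [Matrix.mul_apply, Matrix.vecMulVec_apply, Pi.star_apply]
    have hbb' : ∑ k, star (b k) * b k = 1 := by
      simpa [dotProduct] using hbb
    calc ∑ k, b i * star (b k) * (b k * star (b j))
        = (b i * star (b j)) * ∑ k, star (b k) * b k := by
          rw [Finset.mul_sum]; exact Finset.sum_congr rfl fun k _ => by ring
      _ = b i * star (b j) := by rw [hbb', mul_one]
  have hQ2 : Q * Q = Q := by
    rw [hQ]
    have h1 : (1 - Matrix.vecMulVec b (star b)) * (1 - Matrix.vecMulVec b (star b))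
        = 1 - Matrix.vecMulVec b (star b) - Matrix.vecMulVec b (star b)
          + Matrix.vecMulVec b (star b) * Matrix.vecMulVec b (star b) := by
      noncomm_ring
    rw [h1, hP2]
    abel
  have hQH : Qᴴ = Q := by
    rw [hQ]
    have : (Matrix.vecMulVec b (star b))ᴴ = Matrix.vecMulVec b (star b) := by
      ext i j
      simp only [Matrix.conjTranspose_apply, Matrix.vecMulVec_apply, Pi.star_apply,
        StarMul.star_mul, star_star]
    simp [Matrix.conjTranspose_sub, this]
  intro i hi
  set lam : ℝ := hMh.eigenvalues i with hlam
  set v : Fin N → ℂ := ⇑(hMh.eigenvectorBasis i) with hv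
  have hMv : M *ᵥ v = lam • v := hMh.mulVec_eigenvectorBasis i
  have hQM : Q * M = M := by
    rw [hM, ← mul_assoc, ← mul_assoc, hQ2]
  have hQv : Q *ᵥ v = v := by
    have h1 : Q *ᵥ (M *ᵥ v) = M *ᵥ v := by rw [Matrix.mulVec_mulVec, hQM]
    rw [hMv, Matrix.mulVec_smul] at h1
    exact smul_right_injective (Fin N → ℂ) hi h1
  -- express the eigenvalue
  have hev : lam = Complex.re (dotProduct (star v) (M *ᵥ v)) :=
    hMh.eigenvalues_eq i
  have hMv2 : M *ᵥ v = Q *ᵥ ((B * B) *ᵥ v) := by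
    rw [hM, pow_two, ← Matrix.mulVec_mulVec, hQv, ← Matrix.mulVec_mulVec]
  have hkey : ∀ w, dotProduct (star v) (Q *ᵥ w) = dotProduct (star v) w := by
    intro w
    rw [Matrix.dotProduct_mulVec]
    congr 1
    have h2 : star v ᵥ* Q = star (Q *ᵥ v) := by rw [Matrix.star_mulVec, hQH]
    rw [h2, hQv]
  have hBB : dotProduct (star v) ((B * B) *ᵥ v)
      = dotProduct (star (B *ᵥ v)) (B *ᵥ v) := by
    rw [Matrix.star_mulVec, hB.eq, ← Matrix.dotProduct_mulVec, Matrix.mulVec_mulVec]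
  -- move to EuclideanSpace
  set W : EuclideanSpace ℂ (Fin N) := (WithLp.equiv 2 (Fin N → ℂ)).symm (B *ᵥ v) with hW
  have hWW : dotProduct (star (B *ᵥ v)) (B *ᵥ v) = ⟪W, W⟫_ℂ := by rw [EuclideanSpace.inner_eq_star_dotProduct, dotProduct_comm]; rfl
  set u : Fin N → EuclideanSpace ℂ (Fin N) := fun j => hA.eigenvectorBasis j with hu
  have hsum : ∑ j, ⟪W, u j⟫_ℂ * ⟪u j, W⟫_ℂ = ⟪W, W⟫_ℂ :=
    (hA.eigenvectorBasis).sum_inner_mul_inner W W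
  set σ : Fin N → ℂ := fun j => ⟪u j, (hMh.eigenvectorBasis i : EuclideanSpace ℂ (Fin N))⟫_ℂ
    with hσ
  have ht : ∀ j, ⟪u j, W⟫_ℂ = ((1 - f + f * hA.eigenvalues j : ℝ) : ℂ) * σ j := by
    intro j
    have e1 : ⟪u j, W⟫_ℂ = dotProduct (star ⇑(hA.eigenvectorBasis j)) (B *ᵥ v) := by rw [EuclideanSpace.inner_eq_star_dotProduct, dotProduct_comm]; rfl
    have e2 : σ j = dotProduct (star ⇑(hA.eigenvectorBasis j)) v := by
        rw [hσ]; dsimp only; rw [EuclideanSpace.inner_eq_star_dotProduct, dotProduct_comm]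
    rw [e1, e2, Matrix.dotProduct_mulVec, ← hB.eq, ← Matrix.star_mulVec, hBu j]
    rw [star_smul, smul_dotProduct]
    simp [Complex.star_def, Complex.conj_ofReal]
  have hVV : ∑ j, Complex.normSq (σ j) = 1 := by
    have h1 : ∑ j, ⟪(hMh.eigenvectorBasis i : EuclideanSpace ℂ (Fin N)), u j⟫_ℂ
        * ⟪u j, (hMh.eigenvectorBasis i : EuclideanSpace ℂ (Fin N))⟫_ℂ
        = ⟪(hMh.eigenvectorBasis i : EuclideanSpace ℂ (Fin N)),
            (hMh.eigenvectorBasis i : EuclideanSpace ℂ (Fin N))⟫_ℂ :=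
      (hA.eigenvectorBasis).sum_inner_mul_inner _ _
    have h2 : ⟪(hMh.eigenvectorBasis i : EuclideanSpace ℂ (Fin N)),
        (hMh.eigenvectorBasis i : EuclideanSpace ℂ (Fin N))⟫_ℂ = 1 := by
      rw [inner_self_eq_norm_sq_to_K, hMh.eigenvectorBasis.orthonormal.1 i]
      norm_num
    have h3 : ∀ j, ⟪(hMh.eigenvectorBasis i : EuclideanSpace ℂ (Fin N)), u j⟫_ℂ
        * ⟪u j, (hMh.eigenvectorBasis i : EuclideanSpace ℂ (Fin N))⟫_ℂ
        = ((Complex.normSq (σ j) : ℝ) : ℂ) := by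
      intro j
      rw [show ⟪(hMh.eigenvectorBasis i : EuclideanSpace ℂ (Fin N)), u j⟫_ℂ
          = (starRingEnd ℂ) (σ j) from (inner_conj_symm _ _).symm,
        ← Complex.normSq_eq_conj_mul_self]
    rw [Finset.sum_congr rfl (fun j _ => h3 j), ← Complex.ofReal_sum, h2] at h1
    exact_mod_cast h1
  have hlamsum : lam = ∑ j, (1 - f + f * hA.eigenvalues j) ^ 2 * Complex.normSq (σ j) := by
    rw [hev, hMv2, hkey, hBB, hWW, ← hsum]
    have h3 : ∀ j, ⟪W, u j⟫_ℂ * ⟪u j, W⟫_ℂ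
        = (((1 - f + f * hA.eigenvalues j) ^ 2 * Complex.normSq (σ j) : ℝ) : ℂ) := by
      intro j
      rw [show ⟪W, u j⟫_ℂ = (starRingEnd ℂ) ⟪u j, W⟫_ℂ from (inner_conj_symm _ _).symm,
        ← Complex.normSq_eq_conj_mul_self, ht j, Complex.normSq_mul, Complex.normSq_ofReal]
      push_cast
      ring
    rw [Finset.sum_congr rfl (fun j _ => h3 j), ← Complex.ofReal_sum, Complex.ofReal_re]
  rw [hlamsum]
  have hterm : ∀ j, (1 - f + f / κ) ^ 2 * Complex.normSq (σ j)
      ≤ (1 - f + f * hA.eigenvalues j) ^ 2 * Complex.normSq (σ j) := by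
    intro j
    apply mul_le_mul_of_nonneg_right _ (Complex.normSq_nonneg _)
    apply pow_le_pow_left₀ hc0.le
    have h1 : 1 / κ ≤ hA.eigenvalues j := (hspec j).1
    have h2 : f / κ ≤ f * hA.eigenvalues j := by
      rw [div_eq_mul_inv, ← one_div]
      exact mul_le_mul_of_nonneg_left h1 hf0
    linarith
  calc (1 - f + f / κ) ^ 2
      = ∑ j, (1 - f + f / κ) ^ 2 * Complex.normSq (σ j) := by
        rw [← Finset.mul_sum, hVV, mul_one]
    _ ≤ ∑ j, (1 - f + f * hA.eigenvalues j) ^ 2 * Complex.normSq (σ j) :=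
        Finset.sum_le_sum fun j _ => hterm j
end

section
/- Let f(s) = c_e^{-1} ∫₀^s exp(-1/(t(1-t))) dt with c_e = ∫₀¹ exp(-1/(t(1-t))) dt. Then for every k ≥ 1 and 0 < s < 1, |f^{(k)}(s)| ≤ (4e/c_e) · exp(-1/(s(1-s))) · (2/(s(1-s)))^{2(k-1)} · (k!)²/(k+1)². -/
open Metric MeasureTheory intervalIntegral Filter

lemma aux_iteratedDeriv_congr {f₁ f₂ : ℝ → ℝ} {x : ℝ} (h : f₁ =ᶠ[nhds x] f₂) (n : ℕ) :
    iteratedDeriv n f₁ =ᶠ[nhds x] iteratedDeriv n f₂ := by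
  induction n with
  | zero => simpa using h
  | succ n ih => simpa only [iteratedDeriv_succ] using ih.deriv

lemma aux_iteratedDeriv_const_mul (c : ℝ) (h : ℝ → ℝ) (n : ℕ) :
    iteratedDeriv n (fun x => c * h x) = fun x => c * iteratedDeriv n h x := by
  induction n generalizing h with
  | zero => simp
  | succ n ih =>
      rw [iteratedDeriv_succ', iteratedDeriv_succ']
      rw [show deriv (fun x => c * h x) = fun x => c * deriv h x from
        funext fun x => deriv_const_mul_field c]
      exact ih (deriv h)

lemma aux_cauchy_bound {F : ℂ → ℂ} {c : ℂ} {R M : ℝ} (hR : 0 < R)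
    (hd : DifferentiableOn ℂ F (closedBall c R))
    (hM : ∀ z ∈ sphere c R, ‖F z‖ ≤ M) (n : ℕ) :
    ‖iteratedDeriv n F c‖ ≤ n.factorial * M / R ^ n := by
  lift R to NNReal using hR.le with R' hR'
  have hR0 : (0 : NNReal) < R' := by exact_mod_cast hR
  have h := hd.hasFPowerSeriesOnBall hR0
  have h1 : (n.factorial : ℂ) • (cauchyPowerSeries F c R' n fun _ => (1:ℂ))
      = iteratedFDeriv ℂ n F c fun _ => 1 := by
    have := h.factorial_smul (1 : ℂ) n
    simpa [nsmul_eq_mul] using this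
  have hM0 : 0 ≤ M := le_trans (norm_nonneg _) (hM _ (circleMap_mem_sphere c hR.le 0))
  have hcomp : Continuous fun θ : ℝ => F (circleMap c R' θ) := by
    rw [← continuousOn_univ]
    exact hd.continuousOn.comp (continuous_circleMap c R').continuousOn
      (fun θ _ => sphere_subset_closedBall (circleMap_mem_sphere c hR.le θ))
  have hint : (∫ θ : ℝ in (0)..2 * Real.pi, ‖F (circleMap c R' θ)‖) ≤ 2 * Real.pi * M := by
    calc (∫ θ : ℝ in (0)..2 * Real.pi, ‖F (circleMap c R' θ)‖)
        ≤ ∫ _ : ℝ in (0)..2 * Real.pi, M := by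
          refine integral_mono_on Real.two_pi_pos.le
            (hcomp.norm.intervalIntegrable _ _) intervalIntegrable_const ?_
          exact fun θ _ => hM _ (circleMap_mem_sphere c hR.le θ)
      _ = 2 * Real.pi * M := by simp [mul_comm]
  have hIp : ‖cauchyPowerSeries F c R' n‖ ≤ M * (R' : ℝ)⁻¹ ^ n := by
    refine (norm_cauchyPowerSeries_le F c R' n).trans ?_
    have : |(R' : ℝ)| = (R' : ℝ) := abs_of_nonneg R'.coe_nonneg
    rw [this]
    refine mul_le_mul_of_nonneg_right ?_ (pow_nonneg (inv_nonneg.2 R'.coe_nonneg) n)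
    calc (2 * Real.pi)⁻¹ * ∫ θ : ℝ in (0)..2 * Real.pi, ‖F (circleMap c R' θ)‖
        ≤ (2 * Real.pi)⁻¹ * (2 * Real.pi * M) := by
          gcongr
      _ = M := by field_simp
  have heq : iteratedDeriv n F c = (n.factorial : ℂ) • (cauchyPowerSeries F c R' n fun _ => (1:ℂ)) := by
    rw [h1, iteratedDeriv_eq_iteratedFDeriv]
  rw [heq]
  rw [norm_smul]
  have h2 : ‖(cauchyPowerSeries F c R' n fun _ => (1:ℂ))‖ ≤ M * (R' : ℝ)⁻¹ ^ n := by
    refine le_trans (ContinuousMultilinearMap.le_opNorm _ _) ?_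
    simpa using hIp
  calc ‖(n.factorial : ℂ)‖ * ‖(cauchyPowerSeries F c R' n fun _ => (1:ℂ))‖
      ≤ (n.factorial : ℝ) * (M * (R' : ℝ)⁻¹ ^ n) := by
        rw [show ‖(n.factorial : ℂ)‖ = (n.factorial : ℝ) by
          simp [Complex.norm_natCast]]
        gcongr
    _ = n.factorial * M / (R' : ℝ) ^ n := by rw [inv_pow]; ring

lemma aux_analytic_iter {F : ℂ → ℂ} {U : Set ℂ} (hF : AnalyticOnNhd ℂ F U) (n : ℕ) :
    AnalyticOnNhd ℂ (iteratedDeriv n F) U := by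
  induction n with
  | zero => simpa using hF
  | succ n ih => rw [iteratedDeriv_succ]; exact ih.deriv

lemma aux_re_iter {F : ℂ → ℂ} {U : Set ℂ} (hU : IsOpen U) (hF : AnalyticOnNhd ℂ F U) (n : ℕ) :
    ∀ x : ℝ, (x : ℂ) ∈ U → iteratedDeriv n (fun y : ℝ => (F y).re) x = (iteratedDeriv n F x).re := by
  induction n with
  | zero => intro x hx; simp
  | succ n ih =>
      intro x hx
      have hUo : IsOpen {y : ℝ | (y : ℂ) ∈ U} := hU.preimage Complex.continuous_ofReal
      have hmem : {y : ℝ | (y : ℂ) ∈ U} ∈ nhds x := hUo.mem_nhds hx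
      have hev : iteratedDeriv n (fun y : ℝ => (F y).re) =ᶠ[nhds x]
          fun y : ℝ => (iteratedDeriv n F y).re :=
        eventually_of_mem hmem fun y hy => ih y hy
      rw [iteratedDeriv_succ, hev.deriv_eq]
      have hder : HasDerivAt (iteratedDeriv n F) (deriv (iteratedDeriv n F) (x : ℂ)) (x : ℂ) :=
        ((aux_analytic_iter hF n (x : ℂ) hx).differentiableAt).hasDerivAt
      rw [hder.real_of_complex.deriv, iteratedDeriv_succ]


set_option maxHeartbeats 1000000

theorem stmt_14
    (g : ℝ → ℝ)
    (hg : ∀ t, g t = if t ∈ Set.Ioo (0:ℝ) 1 then Real.exp (-(1 / (t * (1 - t)))) else 0)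
    (ce : ℝ) (hce : ce = ∫ t in (0:ℝ)..1, g t)
    (f : ℝ → ℝ) (hf : ∀ s, f s = ce⁻¹ * ∫ t in (0:ℝ)..s, g t)
    (k : ℕ) (hk : 1 ≤ k) (s : ℝ) (hs : s ∈ Set.Ioo (0:ℝ) 1) :
    |iteratedDeriv k f s| ≤
      (4 * Real.exp 1 / ce) * Real.exp (-(1 / (s * (1 - s)))) *
        (2 / (s * (1 - s))) ^ (2 * (k - 1)) * (k.factorial : ℝ) ^ 2 / ((k : ℝ) + 1) ^ 2 := by
  obtain ⟨hs0, hs1⟩ := hs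
  set a : ℝ := s * (1 - s) with ha_def
  have ha : 0 < a := mul_pos hs0 (by linarith)
  have ha4 : a ≤ 1/4 := by rw [ha_def]; nlinarith [sq_nonneg (s - 1/2)]
  -- measurability and integrability of g
  have hgm : Measurable g := by
    rw [funext hg]
    have hm1 : Measurable fun t : ℝ => Real.exp (-(1 / (t * (1 - t)))) := by
      simp only [one_div]
      exact Real.measurable_exp.comp
        ((measurable_id.mul (measurable_const.sub measurable_id)).inv.neg)
    exact Measurable.ite measurableSet_Ioo hm1 measurable_const
  have hgb : ∀ t, ‖g t‖ ≤ 1 := by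
    intro t
    rw [hg]
    split_ifs with h
    · rw [Real.norm_eq_abs, abs_of_pos (Real.exp_pos _)]
      rw [Real.exp_le_one_iff]
      obtain ⟨ht0, ht1⟩ := h
      have : 0 < t * (1 - t) := mul_pos ht0 (by linarith)
      have : 0 ≤ 1 / (t * (1 - t)) := by positivity
      linarith
    · simp
  have gint : ∀ x y : ℝ, IntervalIntegrable g volume x y := by
    intro x y
    rw [intervalIntegrable_iff]
    exact Measure.integrableOn_of_bounded measure_Ioc_lt_top.ne
      hgm.aestronglyMeasurable (ae_of_all _ hgb)
  have ce_pos : 0 < ce := by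
    rw [hce]
    refine intervalIntegral_pos_of_pos_on (gint 0 1) ?_ one_pos
    intro x hx
    rw [hg, if_pos hx]
    exact Real.exp_pos _
  -- derivative of f
  have gcont : ∀ x ∈ Set.Ioo (0:ℝ) 1, ContinuousAt g x := by
    intro x hx
    have hne : x * (1 - x) ≠ 0 := by
      obtain ⟨hx0, hx1⟩ := hx
      exact ne_of_gt (mul_pos hx0 (by linarith))
    have hc : ContinuousAt (fun t : ℝ => Real.exp (-(1 / (t * (1 - t))))) x :=
      (Real.continuous_exp.continuousAt).comp
        ((continuousAt_const.div (continuousAt_id.mul (continuousAt_const.sub continuousAt_id))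
          hne).neg)
    refine hc.congr ?_
    exact eventually_of_mem (isOpen_Ioo.mem_nhds hx) fun t ht => (hg t).trans (if_pos ht) |>.symm
  have hfd : ∀ x ∈ Set.Ioo (0:ℝ) 1, HasDerivAt f (ce⁻¹ * g x) x := by
    intro x hx
    have h1 : HasDerivAt (fun u => ∫ t in (0:ℝ)..u, g t) (g x) x :=
      intervalIntegral.integral_hasDerivAt_right (gint 0 x)
        ⟨Set.univ, Filter.univ_mem, hgm.aestronglyMeasurable.restrict⟩ (gcont x hx)
    rw [funext hf]
    exact h1.const_mul ce⁻¹
  obtain ⟨n, rfl⟩ : ∃ n, k = n + 1 := ⟨k - 1, (Nat.succ_pred_eq_of_pos hk).symm⟩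
  -- step C : iterated derivative of f in terms of g
  have hdf : deriv f =ᶠ[nhds s] fun x => ce⁻¹ * g x :=
    eventually_of_mem (isOpen_Ioo.mem_nhds ⟨hs0, hs1⟩) fun x hx => (hfd x hx).deriv
  have hC : iteratedDeriv (n+1) f s = ce⁻¹ * iteratedDeriv n g s := by
    calc iteratedDeriv (n+1) f s = iteratedDeriv n (deriv f) s := by rw [iteratedDeriv_succ']
      _ = iteratedDeriv n (fun x => ce⁻¹ * g x) s := (aux_iteratedDeriv_congr hdf n).eq_of_nhds
      _ = ce⁻¹ * iteratedDeriv n g s := by rw [aux_iteratedDeriv_const_mul]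
  -- complex function
  set G : ℂ → ℂ := fun z => Complex.exp (-(1 / (z * (1 - z)))) with hG_def
  set U : Set ℂ := {z : ℂ | z * (1 - z) ≠ 0} with hU_def
  have hUo : IsOpen U := isOpen_compl_singleton.preimage (continuous_id.mul (continuous_const.sub continuous_id))
  have hGan : AnalyticOnNhd ℂ G U := by
    refine DifferentiableOn.analyticOnNhd ?_ hUo
    intro z hz
    exact (((differentiableAt_const (1:ℂ)).div
      (by fun_prop : DifferentiableAt ℂ (fun z : ℂ => z * (1 - z)) z) hz).neg.cexp
      ).differentiableWithinAt
  have hsU : ((s : ℝ) : ℂ) ∈ U := by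
    show (s:ℂ) * (1 - (s:ℂ)) ≠ 0
    have : (s:ℂ) * (1 - (s:ℂ)) = ((a : ℝ) : ℂ) := by rw [ha_def]; push_cast; ring
    rw [this]
    exact_mod_cast ha.ne'
  -- step D : real iterated derivative = real part of complex one
  have hev : g =ᶠ[nhds s] fun y : ℝ => (G y).re := by
    refine eventually_of_mem (isOpen_Ioo.mem_nhds ⟨hs0, hs1⟩) fun y hy => ?_
    rw [hg, if_pos hy]
    show Real.exp (-(1 / (y * (1 - y)))) = (Complex.exp (-(1 / ((y:ℂ) * (1 - (y:ℂ)))))).re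
    have h : (-(1 / ((y:ℂ) * (1 - (y:ℂ))))) = ((-(1 / (y * (1 - y))) : ℝ) : ℂ) := by
      push_cast; ring
    rw [h, ← Complex.ofReal_exp, Complex.ofReal_re]
  have hD : iteratedDeriv n g s = (iteratedDeriv n G s).re := by
    rw [(aux_iteratedDeriv_congr hev n).eq_of_nhds]
    exact aux_re_iter hUo hGan n s hsU
  -- step E : Cauchy estimate
  set R : ℝ := a^2/4 with hR_def
  have hRpos : 0 < R := by positivity
  have hRa : R ≤ a/16 := by rw [hR_def]; nlinarith
  have hRs : R < s := by
    have h1 : a < s := by rw [ha_def]; nlinarith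
    linarith
  have hRs' : R < 1 - s := by
    have h1 : a < 1 - s := by rw [ha_def]; nlinarith
    linarith
  have hball : closedBall ((s:ℝ):ℂ) R ⊆ U := by
    intro z hz
    rw [mem_closedBall, Complex.dist_eq] at hz
    show z * (1 - z) ≠ 0
    refine mul_ne_zero ?_ ?_
    · intro h0
      rw [h0] at hz
      have h : ‖(0 - (s:ℂ))‖ = s := by
        rw [zero_sub, ← Complex.ofReal_neg, Complex.norm_real, Real.norm_eq_abs, abs_neg, abs_of_pos hs0]
      rw [h] at hz; linarith
    · rw [sub_ne_zero]
      intro h1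
      rw [← h1] at hz
      have h : ‖(1 - (s:ℂ))‖ = 1 - s := by
        rw [show (1 : ℂ) - (s:ℂ) = ((1 - s : ℝ) : ℂ) by push_cast; ring, Complex.norm_real, Real.norm_eq_abs,
          abs_of_pos (show (0:ℝ) < 1 - s by linarith)]
      rw [h] at hz; linarith
  have hMbound : ∀ z ∈ sphere ((s:ℝ):ℂ) R, ‖G z‖ ≤ Real.exp 1 * Real.exp (-(1/a)) := by
    intro z hz
    rw [mem_sphere, Complex.dist_eq] at hz
    set w : ℂ := z * (1 - z) with hw_def
    have key1 : w - ((a:ℝ):ℂ) = (z - s) * (1 - 2*s) - (z - s)^2 := by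
      rw [hw_def, ha_def]; push_cast; ring
    have hζ : ‖(z - (s:ℂ))‖ = R := hz
    have h12s : ‖(1 - 2*(s:ℂ))‖ ≤ 1 := by
      rw [show (1 : ℂ) - 2*(s:ℂ) = ((1 - 2*s : ℝ) : ℂ) by push_cast; ring, Complex.norm_real, Real.norm_eq_abs]
      rw [abs_le]; constructor <;> linarith
    have hwa : ‖(w - ((a:ℝ):ℂ))‖ ≤ a^2/2 := by
      rw [key1]
      calc ‖((z - s) * (1 - 2*s) - (z - s)^2)‖
          ≤ ‖((z - s) * (1 - 2*(s:ℂ)))‖ + ‖((z - (s:ℂ))^2)‖ := by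
            exact (norm_sub_le _ _)
        _ = ‖(z - s)‖ * ‖(1 - 2*(s:ℂ))‖ + ‖(z - (s:ℂ))‖^2 := by
            rw [norm_mul, norm_pow]
        _ ≤ R * 1 + R^2 := by rw [hζ]; gcongr
        _ ≤ a^2/2 := by rw [hR_def]; nlinarith
    have hw_norm : 7*a/8 ≤ ‖w‖ := by
      have h1 : ‖((a:ℝ):ℂ)‖ = a := by simp [Complex.norm_real, abs_of_pos ha]
      have h2 : ‖((a:ℝ):ℂ)‖ ≤ ‖w‖ + ‖(w - ((a:ℝ):ℂ))‖ := by
        calc ‖((a:ℝ):ℂ)‖ = ‖(w - (w - ((a:ℝ):ℂ)))‖ := by ring_nf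
          _ ≤ _ := norm_sub_le _ _
      rw [h1] at h2
      nlinarith
    have hw0 : w ≠ 0 := by
      intro h0
      rw [h0] at hw_norm
      simp at hw_norm
      nlinarith
    have ha0 : ((a:ℝ):ℂ) ≠ 0 := by exact_mod_cast ha.ne'
    have hinv : ‖(1/w - 1/((a:ℝ):ℂ))‖ ≤ 1 := by
      have heq : 1/w - 1/((a:ℝ):ℂ) = (((a:ℝ):ℂ) - w) / (w * ((a:ℝ):ℂ)) := by
        field_simp
      rw [heq, norm_div, norm_mul]
      rw [show ‖((a:ℝ):ℂ)‖ = a by simp [Complex.norm_real, abs_of_pos ha]]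
      rw [show ‖(((a:ℝ):ℂ) - w)‖ = ‖(w - ((a:ℝ):ℂ))‖ by
        rw [← norm_neg]; ring_nf]
      have hden : 7*a/8 * a ≤ ‖w‖ * a := by gcongr
      have hdenpos : 0 < 7*a/8 * a := by positivity
      calc ‖(w - ((a:ℝ):ℂ))‖ / (‖w‖ * a)
          ≤ (a^2/2) / (7*a/8 * a) :=
            div_le_div₀ (by positivity) hwa hdenpos hden
        _ ≤ 1 := by rw [div_le_one hdenpos]; nlinarith
    have hre : 1/a - 1 ≤ (1/w).re := by
      have h1 : |(1/w - 1/((a:ℝ):ℂ)).re| ≤ 1 :=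
        le_trans (Complex.abs_re_le_norm _) hinv
      have h2 : (1/((a:ℝ):ℂ)).re = 1/a := by
        rw [show 1/((a:ℝ):ℂ) = ((1/a : ℝ) : ℂ) by push_cast; ring, Complex.ofReal_re]
      rw [Complex.sub_re, h2, abs_le] at h1
      linarith [h1.1]
    rw [hG_def]
    show ‖(Complex.exp (-(1/w)))‖ ≤ _
    rw [Complex.norm_exp, Complex.neg_re]
    calc Real.exp (-(1/w).re) ≤ Real.exp (-(1/a - 1)) := by
          apply Real.exp_le_exp.2; linarith
      _ = Real.exp 1 * Real.exp (-(1/a)) := by rw [← Real.exp_add]; ring_nf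
  have hE : ‖iteratedDeriv n G ((s:ℝ):ℂ)‖ ≤
      n.factorial * (Real.exp 1 * Real.exp (-(1/a))) / R ^ n :=
    aux_cauchy_bound hRpos ((hGan.mono hball).differentiableOn) hMbound n
  -- final numeric assembly
  have hexp : (2/a) ^ (2 * (n + 1 - 1)) = (R ^ n)⁻¹ := by
    rw [Nat.succ_sub_one, pow_mul, show (2/a)^2 = R⁻¹ by rw [hR_def]; field_simp; ring,
      inv_pow]
  have key : (n.factorial : ℝ) ≤ 4 * ((n+1).factorial : ℝ)^2 / ((n:ℝ) + 1 + 1)^2 := by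
    rw [le_div_iff₀ (by positivity)]
    have h1 : (1:ℝ) ≤ (n.factorial : ℝ) := by exact_mod_cast n.factorial_pos
    push_cast [Nat.factorial_succ]
    have hm : (0:ℝ) ≤ (n:ℝ) := Nat.cast_nonneg n
    have hx0 : (0:ℝ) ≤ (n.factorial:ℝ) := by positivity
    nlinarith [mul_nonneg hx0 (mul_nonneg hm hm), mul_nonneg hx0 hm,
      mul_nonneg (mul_nonneg (sq_nonneg ((n:ℝ)+1)) hx0)
        (by linarith : (0:ℝ) ≤ (n.factorial:ℝ) - 1)]
  have hRn : (0:ℝ) < R ^ n := pow_pos hRpos n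
  rw [hC, hD, hexp]
  have habs : |ce⁻¹ * (iteratedDeriv n G ((s:ℝ):ℂ)).re| ≤
      ce⁻¹ * (n.factorial * (Real.exp 1 * Real.exp (-(1/a))) / R ^ n) := by
    rw [abs_mul, abs_of_pos (inv_pos.2 ce_pos)]
    gcongr
    exact le_trans (Complex.abs_re_le_norm _) hE
  refine le_trans habs ?_
  have hpos : (0:ℝ) < Real.exp 1 * Real.exp (-(1/a)) / (ce * R^n) := by positivity
  have hmain := mul_le_mul_of_nonneg_left key hpos.le
  calc ce⁻¹ * (n.factorial * (Real.exp 1 * Real.exp (-(1/a))) / R ^ n)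
      = Real.exp 1 * Real.exp (-(1/a)) / (ce * R^n) * (n.factorial : ℝ) := by
        field_simp
    _ ≤ Real.exp 1 * Real.exp (-(1/a)) / (ce * R^n) *
        (4 * ((n+1).factorial : ℝ)^2 / ((n:ℝ) + 1 + 1)^2) := hmain
    _ = 4 * Real.exp 1 / ce * Real.exp (-(1/a)) * (R ^ n)⁻¹ *
        ((n+1).factorial : ℝ)^2 / ((n:ℝ) + 1 + 1)^2 := by
        field_simp
    _ = _ := by push_cast; ring
end

section
/- Let g(y) = exp(1/y) for y > 0. For every nonnegative integer m and every 0 < y < 1, the m-th derivative satisfies |g^{(m)}(y)| ≤ 4^m · m! · exp(1/y) · y^{-2m}. -/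
open Polynomial Finset

private lemma key_15 (m : ℕ) : ∃ P : Polynomial ℝ,
    (∀ t : ℝ, 0 < t →
      iteratedDeriv m (fun t : ℝ => Real.exp (1 / t)) t = Real.exp (1 / t) * P.eval (1 / t)) ∧
    (∀ k, 2 * m < k → P.coeff k = 0) ∧
    (∑ k ∈ Finset.range (2 * m + 1), |P.coeff k|) ≤ 4 ^ m * m.factorial := by
  induction m with
  | zero =>
    refine ⟨1, ?_, ?_, ?_⟩
    · intro t ht; simp [iteratedDeriv_zero]
    · intro k hk
      rw [Polynomial.coeff_one, if_neg (by omega)]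
    · simp
  | succ m ih =>
    obtain ⟨P, hId, hVan, hSum⟩ := ih
    set R : Polynomial ℝ := P + Polynomial.derivative P with hR
    refine ⟨-(R * Polynomial.X ^ 2), ?_, ?_, ?_⟩
    · intro t ht
      have hEq : iteratedDeriv m (fun t : ℝ => Real.exp (1 / t))
          =ᶠ[nhds t] (fun s : ℝ => Real.exp (1 / s) * P.eval (1 / s)) := by
        filter_upwards [isOpen_Ioi.mem_nhds (show t ∈ Set.Ioi (0:ℝ) from ht)] with s hs
        exact hId s hs
      rw [iteratedDeriv_succ, hEq.deriv_eq]
      have h1 : HasDerivAt (fun s : ℝ => 1 / s) (-(1 / t ^ 2)) t := by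
        simpa [one_div] using hasDerivAt_inv ht.ne'
      have hexp : HasDerivAt (fun s : ℝ => Real.exp (1 / s))
          (Real.exp (1 / t) * (-(1 / t ^ 2))) t := h1.exp
      have hP : HasDerivAt (fun s : ℝ => P.eval (1 / s))
          ((Polynomial.derivative P).eval (1 / t) * (-(1 / t ^ 2))) t :=
        (P.hasDerivAt (1 / t)).comp t h1
      have := (hexp.mul hP).deriv
      rw [show (fun s : ℝ => Real.exp (1 / s) * P.eval (1 / s)) = (fun s : ℝ => Real.exp (1 / s)) * (fun s : ℝ => P.eval (1 / s)) from rfl, this]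
      simp only [hR, Polynomial.eval_neg, Polynomial.eval_mul, Polynomial.eval_add,
        Polynomial.eval_pow, Polynomial.eval_X]
      field_simp
      ring
    · intro k hk
      have h2 : 2 ≤ k := by omega
      rw [Polynomial.coeff_neg, Polynomial.coeff_mul_X_pow', if_pos h2]
      have hk2 : 2 * m < k - 2 + 1 := by omega
      rw [hR, Polynomial.coeff_add, Polynomial.coeff_derivative,
        hVan _ (by omega), hVan _ hk2]
      simp
    · have hpeel : ∀ f : ℕ → ℝ, ∑ k ∈ Finset.range (2 * (m + 1) + 1), f k
          = (∑ j ∈ Finset.range (2 * m + 1), f (j + 2)) + f 1 + f 0 := by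
        intro f
        have : 2 * (m + 1) + 1 = 2 * m + 1 + 1 + 1 := by omega
        rw [this, Finset.sum_range_succ' f, Finset.sum_range_succ' (fun i => f (i + 1))]
      rw [hpeel]
      have hc0 : (-(R * Polynomial.X ^ 2)).coeff 0 = 0 := by
        rw [Polynomial.coeff_neg, Polynomial.coeff_mul_X_pow']; simp
      have hc1 : (-(R * Polynomial.X ^ 2)).coeff 1 = 0 := by
        rw [Polynomial.coeff_neg, Polynomial.coeff_mul_X_pow']; simp
      rw [hc0, hc1, abs_zero, add_zero, add_zero]
      have hstep : ∀ j ∈ Finset.range (2 * m + 1),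
          |(-(R * Polynomial.X ^ 2)).coeff (j + 2)|
            ≤ |P.coeff j| + (2 * m + 1) * |P.coeff (j + 1)| := by
        intro j hj
        rw [Polynomial.coeff_neg, Polynomial.coeff_mul_X_pow', if_pos (by omega), abs_neg]
        have : j + 2 - 2 = j := by omega
        rw [this, hR, Polynomial.coeff_add, Polynomial.coeff_derivative]
        refine (abs_add_le _ _).trans ?_
        have hj' : (j : ℝ) + 1 ≤ 2 * (m : ℝ) + 1 := by
          have h := Finset.mem_range.mp hj
          have h2 : j + 1 ≤ 2 * m + 1 := by omega
          exact_mod_cast h2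
        have hb : |P.coeff (j + 1) * ((j : ℝ) + 1)| = ((j : ℝ) + 1) * |P.coeff (j + 1)| := by
          rw [abs_mul, abs_of_nonneg (by positivity : (0:ℝ) ≤ (j : ℝ) + 1)]; ring
        have h3 := mul_le_mul_of_nonneg_right hj' (abs_nonneg (P.coeff (j + 1)))
        linarith
      have hshift : ∑ j ∈ Finset.range (2 * m + 1), |P.coeff (j + 1)|
          ≤ ∑ k ∈ Finset.range (2 * m + 1), |P.coeff k| := by
        have h1 : ∑ j ∈ Finset.range (2 * m + 1), |P.coeff (j + 1)|
            ≤ ∑ k ∈ Finset.range (2 * m + 2), |P.coeff k| := by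
          rw [Finset.sum_range_succ' (fun k => |P.coeff k|)]
          simp [abs_nonneg, le_add_of_nonneg_right]
        have h2 : ∑ k ∈ Finset.range (2 * m + 2), |P.coeff k|
            = ∑ k ∈ Finset.range (2 * m + 1), |P.coeff k| := by
          rw [Finset.sum_range_succ, hVan (2 * m + 1) (by omega)]; simp
        linarith
      calc ∑ j ∈ Finset.range (2 * m + 1), |(-(R * Polynomial.X ^ 2)).coeff (j + 2)|
          ≤ ∑ j ∈ Finset.range (2 * m + 1),
              (|P.coeff j| + (2 * m + 1) * |P.coeff (j + 1)|) :=
            Finset.sum_le_sum hstep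
        _ = (∑ j ∈ Finset.range (2 * m + 1), |P.coeff j|)
              + (2 * m + 1) * ∑ j ∈ Finset.range (2 * m + 1), |P.coeff (j + 1)| := by
            rw [Finset.sum_add_distrib, Finset.mul_sum]
        _ ≤ (∑ j ∈ Finset.range (2 * m + 1), |P.coeff j|)
              + (2 * m + 1) * ∑ j ∈ Finset.range (2 * m + 1), |P.coeff j| := by
            gcongr
        _ = (2 * m + 2) * ∑ j ∈ Finset.range (2 * m + 1), |P.coeff j| := by ring
        _ ≤ (2 * m + 2) * (4 ^ m * m.factorial) := by gcongr
        _ ≤ (4 * ((m : ℝ) + 1)) * (4 ^ m * m.factorial) := by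
            have : (2 * (m : ℝ) + 2) ≤ 4 * ((m : ℝ) + 1) := by linarith
            gcongr
        _ = 4 ^ (m + 1) * (m + 1).factorial := by
            rw [Nat.factorial_succ, pow_succ]; push_cast; ring

theorem stmt_15 (m : ℕ) (y : ℝ) (hy : y ∈ Set.Ioo (0:ℝ) 1) :
    |iteratedDeriv m (fun t : ℝ => Real.exp (1 / t)) y|
      ≤ 4 ^ m * (m.factorial : ℝ) * Real.exp (1 / y) / y ^ (2 * m) := by
  obtain ⟨hy0, hy1⟩ := hy
  obtain ⟨P, hId, hVan, hSum⟩ := key_15 m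
  rw [hId y hy0, abs_mul, abs_of_pos (Real.exp_pos _)]
  have hdeg : P.natDegree < 2 * m + 1 :=
    Nat.lt_succ_of_le (Polynomial.natDegree_le_iff_coeff_eq_zero.mpr hVan)
  have hx1 : (1:ℝ) ≤ 1 / y := by
    rw [le_div_iff₀ hy0]; linarith
  have heval : |P.eval (1 / y)| ≤ (4 ^ m * m.factorial) * (1 / y) ^ (2 * m) := by
    rw [Polynomial.eval_eq_sum_range' hdeg]
    refine (Finset.abs_sum_le_sum_abs _ _).trans ?_
    calc ∑ k ∈ Finset.range (2 * m + 1), |P.coeff k * (1 / y) ^ k|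
        ≤ ∑ k ∈ Finset.range (2 * m + 1), |P.coeff k| * (1 / y) ^ (2 * m) := by
          refine Finset.sum_le_sum fun k hk => ?_
          rw [abs_mul, abs_of_nonneg (by positivity : (0:ℝ) ≤ (1 / y) ^ k)]
          have hp : (1 / y) ^ k ≤ (1 / y) ^ (2 * m) :=
            pow_le_pow_right₀ hx1 (by have := Finset.mem_range.mp hk; omega)
          exact mul_le_mul_of_nonneg_left hp (abs_nonneg _)
      _ = (∑ k ∈ Finset.range (2 * m + 1), |P.coeff k|) * (1 / y) ^ (2 * m) := by
          rw [Finset.sum_mul]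
      _ ≤ (4 ^ m * m.factorial) * (1 / y) ^ (2 * m) := by gcongr
  calc Real.exp (1 / y) * |P.eval (1 / y)|
      ≤ Real.exp (1 / y) * ((4 ^ m * m.factorial) * (1 / y) ^ (2 * m)) := by
        gcongr
    _ = 4 ^ m * (m.factorial : ℝ) * Real.exp (1 / y) / y ^ (2 * m) := by
        rw [div_pow, one_pow]; field_simp
end

section
/- Let κ > e, l ≥ 1 an integer, c = √c_e/4 with c_e = ∫₀¹ exp(-1/(t(1-t))) dt, and let f be the AQC(exp) schedule f(s) = c_e^{-1}∫₀^s exp(-1/(t(1-t)))dt. Define F(s) = exp(-1/(s(1-s))) / ((1 - f(s) + f(s)/κ)·(s(1-s))^{2l-2}) for s ∈ (0,1). Then for all s ∈ (0,1), F(s) ≤ (2c_e/e²) · (64e²/c_e)^l · (log κ)^{2l} · (l!)². -/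
open MeasureTheory intervalIntegral Set

noncomputable def G : ℝ → ℝ := fun t => if t ∈ Set.Ioo (0:ℝ) 1 then Real.exp (-(1 / (t * (1 - t)))) else 0

lemma G_nonneg (t : ℝ) : 0 ≤ G t := by
  unfold G; split <;> positivity

lemma G_le_one (t : ℝ) : G t ≤ 1 := by
  unfold G; split
  · rename_i h
    rw [Real.exp_le_one_iff]
    have h1 : 0 < t * (1 - t) := by nlinarith [h.1, h.2]
    have : (0:ℝ) ≤ 1 / (t * (1-t)) := by positivity
    linarith
  · norm_num

lemma G_measurable : Measurable G := by
  unfold G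
  apply Measurable.ite measurableSet_Ioo _ measurable_const
  fun_prop

lemma G_intInt (a b : ℝ) : IntervalIntegrable G volume a b := by
  apply IntervalIntegrable.mono_fun (intervalIntegrable_const (c := (1:ℝ)))
    G_measurable.aestronglyMeasurable
  filter_upwards with t
  rw [Real.norm_eq_abs, norm_one, abs_of_nonneg (G_nonneg t)]
  exact G_le_one t

lemma G_symm (t : ℝ) : G (1 - t) = G t := by
  unfold G
  have h2 : (1 - t) ∈ Set.Ioo (0:ℝ) 1 ↔ t ∈ Set.Ioo (0:ℝ) 1 := by
    constructor <;> (intro h; constructor <;> [linarith [h.1, h.2]; linarith [h.1, h.2]])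
  rw [if_congr h2 rfl rfl]
  split
  · ring_nf
  · rfl

lemma G_int_pos : 0 < ∫ t in (0:ℝ)..1, G t := by
  apply intervalIntegral.intervalIntegral_pos_of_pos_on (G_intInt 0 1) _ one_pos
  intro x hx
  unfold G; rw [if_pos hx]; positivity

lemma G_int_le : (∫ t in (0:ℝ)..1, G t) ≤ Real.exp (-4) := by
  have h : (∫ t in (0:ℝ)..1, G t) ≤ ∫ _ in (0:ℝ)..1, Real.exp (-4) := by
    apply intervalIntegral.integral_mono_on one_pos.le (G_intInt 0 1)
      intervalIntegrable_const
    intro t _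
    unfold G; split
    · rename_i h
      apply Real.exp_le_exp.2
      have h1 : 0 < t * (1 - t) := by nlinarith [h.1, h.2]
      have h2 : t * (1 - t) ≤ 1/4 := by nlinarith [sq_nonneg (2*t-1)]
      have : (4:ℝ) ≤ 1 / (t * (1 - t)) := by
        rw [le_div_iff₀ h1]; linarith
      linarith
    · positivity
  simpa using h

lemma G_half : (∫ t in (0:ℝ)..(1/2 : ℝ), G t) = ∫ t in (1/2 : ℝ)..1, G t := by
  have := intervalIntegral.integral_comp_sub_left (a := (0:ℝ)) (b := (1/2:ℝ)) G 1
  simp only [G_symm] at this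
  rw [this]; norm_num

set_option maxHeartbeats 2000000 in
lemma G_tail (s : ℝ) (hs1 : 1/2 ≤ s) (hs2 : s < 1) :
    (s*(1-s))^2/32 * Real.exp (-(1/(s*(1-s)))) ≤ ∫ t in s..1, G t := by
  set m : ℝ := (1+s)/2 with hm
  set x : ℝ := s*(1-s) with hx
  have hxpos : 0 < x := by rw [hx]; nlinarith
  have hx4 : x ≤ 1/4 := by rw [hx]; nlinarith [sq_nonneg (2*s-1)]
  have hsm : s ≤ m := by rw [hm]; linarith
  have hm1 : m < 1 := by rw [hm]; linarith
  have htfacts : ∀ t ∈ Set.Icc s m, 1/2 ≤ t ∧ t < 1 ∧ x/4 ≤ t*(1-t) ∧ 2*t-1 ≤ 1 := by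
    intro t ht
    obtain ⟨h1, h2⟩ := ht
    refine ⟨by linarith, by rw [hm] at h2; linarith, ?_, by rw [hm] at h2; linarith⟩
    have ht1 : 1 - t ≥ (1-s)/2 := by rw [hm] at h2; linarith
    nlinarith
  have hne : ∀ t ∈ Set.uIcc s m, t*(1-t) ≠ 0 := by
    intro t ht
    rw [Set.uIcc_of_le hsm] at ht
    obtain ⟨_, _, h3, _⟩ := htfacts t ht
    nlinarith
  have hderiv : ∀ t ∈ Set.uIcc s m, HasDerivAt (fun t : ℝ => Real.exp (-(1/(t*(1-t)))))
      (Real.exp (-(1/(t*(1-t)))) * ((1-2*t)/(t*(1-t))^2)) t := by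
    intro t ht
    have h1 : HasDerivAt (fun t : ℝ => t*(1-t)) (1-2*t) t := by
      have := (hasDerivAt_id t).mul ((hasDerivAt_const t (1:ℝ)).sub (hasDerivAt_id t))
      refine this.congr_deriv ?_
      simp only [Pi.sub_apply, id]; ring
    have h3 := ((h1.inv (hne t ht)).neg).exp
    convert h3 using 2 <;> simp [one_div] <;> ring
  have hcontE : ContinuousOn (fun t : ℝ => Real.exp (-(1/(t*(1-t))))) (Set.uIcc s m) := by
    have hu : ContinuousOn (fun t : ℝ => t*(1-t)) (Set.uIcc s m) := by fun_prop
    exact (ContinuousOn.div continuousOn_const hu hne).neg.rexp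
  have hcontD : ContinuousOn (fun t : ℝ => (1-2*t)/(t*(1-t))^2) (Set.uIcc s m) := by
    have hu : ContinuousOn (fun t : ℝ => t*(1-t)) (Set.uIcc s m) := by fun_prop
    exact ContinuousOn.div (by fun_prop) (hu.pow 2) (fun t ht => pow_ne_zero 2 (hne t ht))
  have hint : IntervalIntegrable (fun t : ℝ => Real.exp (-(1/(t*(1-t)))) * ((1-2*t)/(t*(1-t))^2))
      volume s m := (hcontE.mul hcontD).intervalIntegrable
  have key := intervalIntegral.integral_eq_sub_of_hasDerivAt hderiv hint
  have cmp : ∫ t in s..m, x^2/16 * (Real.exp (-(1/(t*(1-t)))) * -((1-2*t)/(t*(1-t))^2))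
      ≤ ∫ t in s..m, G t := by
    apply intervalIntegral.integral_mono_on hsm _ (G_intInt s m)
    · intro t ht
      obtain ⟨h1, h2, h3, h4⟩ := htfacts t ht
      have hGt : G t = Real.exp (-(1/(t*(1-t)))) := by
        unfold G; rw [if_pos]; exact ⟨by linarith, h2⟩
      rw [hGt]
      have hupos : 0 < t*(1-t) := by nlinarith
      have hE : (0:ℝ) < Real.exp (-(1/(t*(1-t)))) := Real.exp_pos _
      set E := Real.exp (-(1/(t*(1-t)))) with hEdef
      have heq : x^2/16 * (E * -((1-2*t)/(t*(1-t))^2)) = (x^2 * E * (2*t-1))/(16*(t*(1-t))^2) := by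
        field_simp
        ring
      rw [heq, div_le_iff₀ (by positivity)]
      have h5 : x^2 ≤ 16*(t*(1-t))^2 := by nlinarith
      nlinarith [mul_le_mul_of_nonneg_right h5 (mul_nonneg hE.le (by linarith : (0:ℝ) ≤ 2*t-1)),
        mul_le_mul_of_nonneg_left h4 (mul_nonneg hE.le (sq_nonneg (t*(1-t))))]
    · exact (continuousOn_const.mul (hcontE.mul hcontD.neg)).intervalIntegrable
  have hval : ∫ t in s..m, x^2/16 * (Real.exp (-(1/(t*(1-t)))) * -((1-2*t)/(t*(1-t))^2))
      = x^2/16 * (Real.exp (-(1/(s*(1-s)))) - Real.exp (-(1/(m*(1-m))))) := by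
    rw [intervalIntegral.integral_const_mul]
    simp only [mul_neg]
    rw [intervalIntegral.integral_neg, key]
    ring
  -- bound on Φ m
  have hΦm : Real.exp (-(1/(m*(1-m)))) ≤ Real.exp (-1) * Real.exp (-(1/x)) := by
    rw [← Real.exp_add]
    apply Real.exp_le_exp.2
    have hxm_pos : 0 < m*(1-m) := by rw [hm]; nlinarith
    have hxm_le : m*(1-m) ≤ 3/4*x := by rw [hm, hx]; nlinarith
    have hxm_small : m*(1-m) ≤ 1/4 := by nlinarith [sq_nonneg (2*m-1)]
    have hgoal : 1 + 1/x ≤ 1/(m*(1-m)) := by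
      rw [le_div_iff₀ hxm_pos]
      have hix : x * (1/x) = 1 := mul_one_div_cancel hxpos.ne'
      have hix_pos : (0:ℝ) < 1/x := by positivity
      nlinarith [mul_le_mul_of_nonneg_left hxm_le hix_pos.le]
    linarith
  have hexp1 : Real.exp (-1 : ℝ) ≤ 1/2 := by
    rw [Real.exp_neg]
    rw [inv_le_comm₀ (Real.exp_pos 1) (by norm_num)]
    norm_num
    linarith [Real.exp_one_gt_d9]
  have hΦs : (0:ℝ) < Real.exp (-(1/x)) := Real.exp_pos _
  have hsplit : (∫ t in s..1, G t) = (∫ t in s..m, G t) + ∫ t in m..1, G t := by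
    rw [intervalIntegral.integral_add_adjacent_intervals (G_intInt s m) (G_intInt m 1)]
  have htail : (0:ℝ) ≤ ∫ t in m..1, G t :=
    intervalIntegral.integral_nonneg hm1.le (fun t _ => G_nonneg t)
  rw [hsplit]
  have := cmp
  rw [hval] at this
  nlinarith [mul_le_mul_of_nonneg_left (hΦm.trans (by nlinarith : Real.exp (-1) * Real.exp (-(1/x)) ≤ 1/2 * Real.exp (-(1/x)))) (by positivity : (0:ℝ) ≤ x^2/16)]


lemma fact_two_mul (n : ℕ) : Nat.factorial (2*n) ≤ 4^n * (Nat.factorial n)^2 := by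
  induction n with
  | zero => simp
  | succ k ih =>
    have h1 : 2*(k+1) = (2*k) + 1 + 1 := by omega
    rw [h1, Nat.factorial_succ, Nat.factorial_succ]
    calc (2*k+1+1) * ((2*k+1) * (2*k).factorial)
        ≤ (2*(k+1)) * ((2*(k+1)) * (4^k * (k.factorial)^2)) := by
          apply Nat.mul_le_mul (by omega)
          apply Nat.mul_le_mul (by omega) ih
      _ = 4^(k+1) * ((k+1).factorial)^2 := by
          rw [Nat.factorial_succ]; ring

lemma exp_neg_le (x : ℝ) (hx : 0 < x) (n : ℕ) :
    Real.exp (-(1/x)) ≤ (Nat.factorial n : ℝ) * x^n := by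
  have h1 : (1/x)^n / (Nat.factorial n : ℝ) ≤ Real.exp (1/x) :=
    Real.pow_div_factorial_le_exp (x := 1/x) (by positivity) n
  have h2 : (0:ℝ) < (1/x)^n / (Nat.factorial n : ℝ) := by positivity
  rw [Real.exp_neg]
  calc (Real.exp (1/x))⁻¹ ≤ ((1/x)^n / (Nat.factorial n : ℝ))⁻¹ := by
        apply inv_anti₀ h2 h1
    _ = (Nat.factorial n : ℝ) * x^n := by
        rw [one_div, inv_pow]
        have hxn : (x:ℝ)^n ≠ 0 := by positivity
        have hfn : (Nat.factorial n : ℝ) ≠ 0 := by positivity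
        field_simp

set_option maxHeartbeats 1000000 in
theorem stmt_16
    (g : ℝ → ℝ)
    (hg : ∀ t, g t = if t ∈ Set.Ioo (0:ℝ) 1 then Real.exp (-(1 / (t * (1 - t)))) else 0)
    (ce : ℝ) (hce : ce = ∫ t in (0:ℝ)..1, g t)
    (f : ℝ → ℝ) (hf : ∀ s, f s = ce⁻¹ * ∫ t in (0:ℝ)..s, g t)
    (κ : ℝ) (hκ : Real.exp 1 < κ) (l : ℕ) (hl : 1 ≤ l)
    (F : ℝ → ℝ)
    (hF : ∀ s, F s = Real.exp (-(1 / (s * (1 - s)))) /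
      ((1 - f s + f s / κ) * (s * (1 - s)) ^ (2 * l - 2)))
    (s : ℝ) (hs : s ∈ Set.Ioo (0:ℝ) 1) :
    F s ≤ (2 * ce / Real.exp 1 ^ 2) * (64 * Real.exp 1 ^ 2 / ce) ^ l *
      Real.log κ ^ (2 * l) * (l.factorial : ℝ) ^ 2 := by
  obtain ⟨k, rfl⟩ : ∃ k, l = k + 1 := ⟨l - 1, by omega⟩
  have hgG : g = G := funext fun t => by rw [hg t]; rfl
  obtain ⟨hs0, hs1⟩ := hs
  set E := Real.exp 1 with hE
  have hE1 : (1:ℝ) < E := by rw [hE]; calc (1:ℝ) < 2.7182818283 := by norm_num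
                                             _ < E := Real.exp_one_gt_d9
  have hEpos : (0:ℝ) < E := by linarith
  set x : ℝ := s * (1 - s) with hx
  have hxpos : 0 < x := by rw [hx]; nlinarith
  have hx4 : x ≤ 1/4 := by rw [hx]; nlinarith [sq_nonneg (2*s-1)]
  set Φ : ℝ := Real.exp (-(1/x)) with hΦ
  have hΦpos : 0 < Φ := Real.exp_pos _
  -- basic ce facts
  rw [hgG] at hce hf
  have hce_pos : 0 < ce := hce ▸ G_int_pos
  have hce_le : ce ≤ Real.exp (-4) := hce ▸ G_int_le
  have hce_le1 : ce ≤ 1 := hce_le.trans (by rw [Real.exp_le_one_iff]; norm_num)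
  -- κ facts
  have hκpos : (0:ℝ) < κ := lt_trans (Real.exp_pos 1) hκ
  have hL : (1:ℝ) ≤ Real.log κ := by
    rw [Real.le_log_iff_exp_le hκpos]; exact hκ.le
  set L : ℝ := Real.log κ with hLdef
  -- f facts
  have hadd : (∫ t in (0:ℝ)..s, G t) + (∫ t in s..(1:ℝ), G t) = ce := by
    rw [hce]; exact intervalIntegral.integral_add_adjacent_intervals (G_intInt 0 s) (G_intInt s 1)
  have htail_nonneg : 0 ≤ ∫ t in s..(1:ℝ), G t :=
    intervalIntegral.integral_nonneg hs1.le (fun t _ => G_nonneg t)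
  have hhead_nonneg : 0 ≤ ∫ t in (0:ℝ)..s, G t :=
    intervalIntegral.integral_nonneg hs0.le (fun t _ => G_nonneg t)
  have hf_nonneg : 0 ≤ f s := by rw [hf]; positivity
  have hf_le1 : f s ≤ 1 := by
    rw [hf, inv_mul_le_iff₀ hce_pos, mul_one]
    linarith
  have hone_sub : 1 - f s = ce⁻¹ * ∫ t in s..(1:ℝ), G t := by
    rw [hf]
    field_simp
    linarith
  have hhalf_eq : (∫ t in (0:ℝ)..(1/2:ℝ), G t) = ce/2 := by
    have h1 : (∫ t in (0:ℝ)..(1/2:ℝ), G t) + (∫ t in (1/2:ℝ)..(1:ℝ), G t) = ce := by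
      rw [hce]
      exact intervalIntegral.integral_add_adjacent_intervals (G_intInt 0 (1/2)) (G_intInt (1/2) 1)
    have := G_half
    linarith
  -- exponent rewriting
  have hexp2 : 2 * (k+1) - 2 = 2 * k := by omega
  have hFs : F s = Φ / ((1 - f s + f s / κ) * x ^ (2*k)) := by
    rw [hF s, hexp2, ← hx, ← hΦ]
  -- RHS lower bound form
  have hRHS_eq : (2 * ce / E ^ 2) * (64 * E ^ 2 / ce) ^ (k+1) * L ^ (2*(k+1)) * ((k+1).factorial : ℝ) ^ 2
      = 128 * (64 * E ^ 2 / ce) ^ k * L ^ (2*(k+1)) * ((k+1).factorial : ℝ) ^ 2 := by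
    rw [pow_succ, div_pow, div_pow]
    field_simp
    ring
  have hbase64 : (64:ℝ) ≤ 64 * E ^ 2 / ce := by
    rw [le_div_iff₀ hce_pos]
    nlinarith
  have hxp_pos : (0:ℝ) < x ^ (2*k) := by positivity
  -- shared numeric bound for cases 1 and 2a
  have hA16 : (16:ℝ)^k ≤ (64*E^2/ce)^k :=
    pow_le_pow_left₀ (by norm_num) (le_trans (by norm_num) hbase64) k
  have hA4 : (4:ℝ)^k ≤ (64*E^2/ce)^k :=
    pow_le_pow_left₀ (by norm_num) (le_trans (by norm_num) hbase64) k
  have hB : ((k.factorial:ℝ))^2 ≤ (((k+1).factorial:ℝ))^2 := by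
    have h : (k.factorial:ℝ) ≤ ((k+1).factorial:ℝ) := by
      exact_mod_cast Nat.factorial_le (by omega)
    exact pow_le_pow_left₀ (by positivity) h 2
  have hB1 : (1:ℝ) ≤ (((k+1).factorial:ℝ))^2 := by
    have : 1 ≤ (k+1).factorial := Nat.one_le_iff_ne_zero.mpr (Nat.factorial_ne_zero _)
    have : (1:ℝ) ≤ ((k+1).factorial:ℝ) := by exact_mod_cast this
    nlinarith
  have hC : (1:ℝ) ≤ L^(2*(k+1)) := by
    calc (1:ℝ) = 1^(2*(k+1)) := (one_pow _).symm
    _ ≤ L^(2*(k+1)) := pow_le_pow_left₀ zero_le_one hL _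
  have hfk : ((2*k).factorial : ℝ) ≤ 4^k * ((k.factorial:ℝ))^2 := by
    exact_mod_cast fact_two_mul k
  have hnum1 : (2:ℝ)^(2*k+1) * ((2*k).factorial : ℝ) ≤
      128 * (64 * E ^ 2 / ce) ^ k * L ^ (2*(k+1)) * ((k+1).factorial : ℝ) ^ 2 := by
    have h16 : (2:ℝ)^(2*k+1) * 4^k = 2 * 16^k := by
      rw [show (4:ℝ)=2^2 from by norm_num, show (16:ℝ)=2^4 from by norm_num,
        ← pow_mul, ← pow_mul, ← pow_add, mul_comm (2:ℝ) (2^(4*k)), ← pow_succ]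
      congr 1
      omega
    calc (2:ℝ)^(2*k+1) * ((2*k).factorial : ℝ)
        ≤ (2:ℝ)^(2*k+1) * (4^k * ((k.factorial:ℝ))^2) := by gcongr
      _ = 2 * 16^k * ((k.factorial:ℝ))^2 := by rw [← mul_assoc, h16]
      _ ≤ 2 * (64 * E ^ 2 / ce) ^ k * ((k+1).factorial : ℝ)^2 := by
          gcongr
      _ ≤ 128 * (64 * E ^ 2 / ce) ^ k * L ^ (2*(k+1)) * ((k+1).factorial : ℝ) ^ 2 := by
          have hpk : (0:ℝ) ≤ (64 * E ^ 2 / ce) ^ k := by positivity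
          nlinarith [mul_le_mul_of_nonneg_left hC (by positivity : (0:ℝ) ≤ 126 * (64 * E ^ 2 / ce) ^ k * ((k+1).factorial : ℝ)^2), mul_nonneg hpk (le_trans zero_le_one hB1)]
  rw [hFs, hRHS_eq]
  rcases le_or_gt s (1/2) with hcase | hcase
  · -- Case 1 : s ≤ 1/2, denominator ≥ 1/2
    have hfs_half : f s ≤ 1/2 := by
      have h2 : (∫ t in (0:ℝ)..s, G t) + (∫ t in s..(1/2:ℝ), G t) = ce / 2 := by
        rw [← hhalf_eq]
        exact intervalIntegral.integral_add_adjacent_intervals (G_intInt 0 s) (G_intInt s (1/2))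
      have h3 : 0 ≤ ∫ t in s..(1/2:ℝ), G t :=
        intervalIntegral.integral_nonneg hcase (fun t _ => G_nonneg t)
      rw [hf, inv_mul_le_iff₀ hce_pos]
      linarith
    have hD : 1/2 ≤ 1 - f s + f s / κ := by
      have : 0 ≤ f s / κ := by positivity
      linarith
    have hDpos : (0:ℝ) < 1/2 * x ^ (2*k) := by positivity
    calc Φ / ((1 - f s + f s / κ) * x ^ (2*k)) ≤ Φ / (1/2 * x ^ (2*k)) := by
          apply div_le_div_of_nonneg_left hΦpos.le hDpos
          apply mul_le_mul_of_nonneg_right hD hxp_pos.le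
      _ = 2 * (Φ / x ^ (2*k)) := by field_simp
      _ ≤ 2 * ((2*k).factorial : ℝ) := by
          apply mul_le_mul_of_nonneg_left _ (by norm_num : (0:ℝ) ≤ 2)
          rw [div_le_iff₀ hxp_pos]
          exact exp_neg_le x hxpos (2*k)
      _ ≤ (2:ℝ)^(2*k+1) * ((2*k).factorial : ℝ) := by
          gcongr
          calc (2:ℝ) = 2^1 := (pow_one 2).symm
            _ ≤ 2^(2*k+1) := pow_le_pow_right₀ (by norm_num) (by omega)
      _ ≤ 128 * (64 * E ^ 2 / ce) ^ k * L ^ (2*(k+1)) * ((k+1).factorial : ℝ) ^ 2 := hnum1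
  · -- Case 2 : s > 1/2
    have hfs_ge : 1/2 ≤ f s := by
      have h2 : (∫ t in (0:ℝ)..(1/2:ℝ), G t) + (∫ t in (1/2:ℝ)..s, G t) = ∫ t in (0:ℝ)..s, G t :=
        intervalIntegral.integral_add_adjacent_intervals (G_intInt 0 (1/2)) (G_intInt (1/2) s)
      have h3 : 0 ≤ ∫ t in (1/2:ℝ)..s, G t :=
        intervalIntegral.integral_nonneg hcase.le (fun t _ => G_nonneg t)
      rw [hf]
      calc (1:ℝ)/2 = ce⁻¹ * (ce/2) := by field_simp
        _ ≤ ce⁻¹ * ∫ t in (0:ℝ)..s, G t := by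
            gcongr
            linarith
    rcases le_or_gt (2*L) (1/x) with hcase2 | hcase2
    · -- Subcase 2a : 1/x ≥ 2 log κ
      have hD : 1/(2*κ) ≤ 1 - f s + f s / κ := by
        have h1 : 1/(2*κ) ≤ f s / κ := by
          rw [show (1:ℝ)/(2*κ) = (1/2)/κ from by ring]
          gcongr
        linarith
      have hDpos : (0:ℝ) < 1/(2*κ) * x ^ (2*k) := by positivity
      have hsplitΦ : Φ = Real.exp (-(1/(2*x))) * Real.exp (-(1/(2*x))) := by
        rw [hΦ, ← Real.exp_add]
        congr 1
        field_simp
        ring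
      have h1 : Real.exp (-(1/(2*x))) ≤ κ⁻¹ := by
        have : κ⁻¹ = Real.exp (-L) := by
          rw [hLdef, Real.exp_neg, Real.exp_log hκpos]
        rw [this, Real.exp_le_exp]
        have : L ≤ 1/(2*x) := by
          rw [le_div_iff₀ (by positivity)]
          rw [le_div_iff₀ hxpos] at hcase2
          linarith
        linarith
      have h2 : Real.exp (-(1/(2*x))) ≤ ((2*k).factorial:ℝ) * (2*x)^(2*k) := by
        have := exp_neg_le (2*x) (by positivity) (2*k)
        rw [show -(1/(2*x)) = -(1/(2*x)) from rfl]
        exact this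
      have hΦle : Φ ≤ κ⁻¹ * (((2*k).factorial:ℝ) * (2*x)^(2*k)) := by
        rw [hsplitΦ]
        apply mul_le_mul h1 h2 (Real.exp_pos _).le (by positivity)
      calc Φ / ((1 - f s + f s / κ) * x ^ (2*k)) ≤ Φ / (1/(2*κ) * x ^ (2*k)) := by
            apply div_le_div_of_nonneg_left hΦpos.le hDpos
            apply mul_le_mul_of_nonneg_right hD hxp_pos.le
        _ = 2 * κ * (Φ / x ^ (2*k)) := by field_simp
        _ ≤ 2 * κ * ((κ⁻¹ * (((2*k).factorial:ℝ) * (2*x)^(2*k))) / x ^ (2*k)) := by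
            gcongr
        _ = (2:ℝ)^(2*k+1) * ((2*k).factorial : ℝ) := by
            rw [mul_pow]
            field_simp
            ring
        _ ≤ 128 * (64 * E ^ 2 / ce) ^ k * L ^ (2*(k+1)) * ((k+1).factorial : ℝ) ^ 2 := hnum1
    · -- Subcase 2b : 1/x < 2 log κ
      have htail := G_tail s (by linarith) hs1
      rw [← hx, ← hΦ] at htail
      have hD : ce⁻¹ * (x^2/32 * Φ) ≤ 1 - f s + f s / κ := by
        have h1 : ce⁻¹ * (x^2/32 * Φ) ≤ 1 - f s := by
          rw [hone_sub]
          gcongr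
        have : 0 ≤ f s / κ := by positivity
        linarith
      have hDpos : (0:ℝ) < ce⁻¹ * (x^2/32 * Φ) * x ^ (2*k) := by positivity
      have h2Lx : 1 ≤ 2*L*x := by
        rw [div_lt_iff₀ hxpos] at hcase2
        nlinarith
      calc Φ / ((1 - f s + f s / κ) * x ^ (2*k)) ≤ Φ / (ce⁻¹ * (x^2/32 * Φ) * x ^ (2*k)) := by
            apply div_le_div_of_nonneg_left hΦpos.le hDpos
            apply mul_le_mul_of_nonneg_right hD hxp_pos.le
        _ = 32 * ce / x^(2*k+2) := by
            field_simp
            ring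
        _ ≤ 32 * ce * (2*L)^(2*k+2) := by
            rw [div_le_iff₀ (by positivity)]
            calc (32:ℝ) * ce = 32*ce*1 := by ring
              _ ≤ 32*ce*((2*L*x)^(2*k+2)) := by
                  gcongr
                  calc (1:ℝ) = 1^(2*k+2) := (one_pow _).symm
                    _ ≤ (2*L*x)^(2*k+2) := pow_le_pow_left₀ zero_le_one h2Lx _
              _ = 32*ce*(2*L)^(2*k+2)*x^(2*k+2) := by rw [mul_pow (2*L) x]; ring
        _ = 128 * 4^k * ce * L^(2*(k+1)) := by
            rw [mul_pow]
            rw [show (2:ℝ)^(2*k+2) = 4*4^k from by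
              rw [show (4:ℝ)=2^2 from by norm_num, ← pow_mul, ← pow_add]
              congr 1
              omega]
            rw [show 2*(k+1) = 2*k+2 from by omega]
            ring
        _ ≤ 128 * (64 * E ^ 2 / ce) ^ k * L ^ (2*(k+1)) * ((k+1).factorial : ℝ) ^ 2 := by
            calc 128 * 4^k * ce * L^(2*(k+1)) ≤ 128 * (64 * E ^ 2 / ce) ^ k * 1 * L^(2*(k+1)) := by
                  gcongr
              _ = 128 * (64 * E ^ 2 / ce) ^ k * L ^ (2*(k+1)) * 1 := by ring
              _ ≤ 128 * (64 * E ^ 2 / ce) ^ k * L ^ (2*(k+1)) * ((k+1).factorial : ℝ) ^ 2 := by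
                  gcongr
end
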